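/- Let G be an AH-algebra and let g,h ∈ G. Then: (i) −1 ≤ g ≤ 1 if and only if g² ≤ 1; (ii) ‖g²‖ = ‖g‖²; (iii) ‖|g|‖ = ‖g‖; (iv) if gCh, then ‖gh‖ ≤ ‖g‖·‖h‖. -/

import Mathlib

/-- An e-ring `(R,E)`: an associative ring `R` with unity together with a set `E ⊆ R`
of effects, satisfying the Foulis axioms.  `E⁺` is realized as the additive submonoid
closure of `E` (the set of all finite sums of effects). -/
structure ERing (R : Type*) [Ring R] where
  E : Set R
  zero_mem : (0 : R) ∈ E
  one_mem : (1 : R) ∈ E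
  compl_mem : ∀ e ∈ E, 1 - e ∈ E
  epos_i : ∀ a ∈ AddSubmonoid.closure E, -a ∈ AddSubmonoid.closure E → a = 0
  epos_ii : ∀ a ∈ AddSubmonoid.closure E, 1 - a ∈ AddSubmonoid.closure E → a ∈ E
  epos_iii : ∀ a ∈ AddSubmonoid.closure E, ∀ b ∈ AddSubmonoid.closure E,
    a * b = b * a → a * b ∈ AddSubmonoid.closure E
  epos_iv : ∀ a ∈ AddSubmonoid.closure E, ∀ b ∈ AddSubmonoid.closure E,
    a * b * a ∈ AddSubmonoid.closure E
  epos_v : ∀ a ∈ AddSubmonoid.closure E, ∀ b ∈ AddSubmonoid.closure E,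
    a * b * a = 0 → a * b = 0 ∧ b * a = 0
  epos_vi : ∀ a ∈ AddSubmonoid.closure E, ∀ b ∈ AddSubmonoid.closure E,
    (a - b) ^ 2 ∈ AddSubmonoid.closure E
  zero_ne_one : (0 : R) ≠ 1

namespace ERing

variable {R : Type*} [Ring R] (er : ERing R)

/-- `E⁺`, the set of all finite sums of effects; the positive cone of the directed group. -/
def Epos : Set R := (AddSubmonoid.closure er.E : Set R)

/-- The directed group `G = E⁺ - E⁺` of the e-ring. -/
def G : Set R := {g | ∃ a ∈ er.Epos, ∃ b ∈ er.Epos, g = a - b}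

/-- The partial order on the directed group: `g ≤ h` iff `h - g ∈ E⁺`. -/
def le (g h : R) : Prop := h - g ∈ er.Epos

/-- The set of projections `P = {p ∈ G : p = p²}`. -/
def P : Set R := {p | p ∈ er.G ∧ p = p ^ 2}

/-- The commutant in `G` of a subset `A ⊆ G`. -/
def commutant (A : Set R) : Set R := {g | g ∈ er.G ∧ ∀ a ∈ A, g * a = a * g}

/-- The bicommutant in `G` of a subset `A ⊆ G`. -/
def CC (A : Set R) : Set R := er.commutant (er.commutant A)

/-- `s` is the supremum of `A` within the subset `S` (w.r.t. the e-ring order). -/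
def IsSupIn (S A : Set R) (s : R) : Prop :=
  s ∈ S ∧ (∀ a ∈ A, er.le a s) ∧ ∀ b ∈ S, (∀ a ∈ A, er.le a b) → er.le s b

/-- `s` is the infimum of `A` within the subset `S` (w.r.t. the e-ring order). -/
def IsInfIn (S A : Set R) (s : R) : Prop :=
  s ∈ S ∧ (∀ a ∈ A, er.le s a) ∧ ∀ b ∈ S, (∀ a ∈ A, er.le b a) → er.le b s

/-- Quadratic annihilation property. -/
def HasQA : Prop := ∀ g ∈ er.G, ∀ h ∈ er.G, g * h ^ 2 * g = 0 → g * h = 0 ∧ h * g = 0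

/-- Commutative Vigier property: every ascending sequence of pairwise commuting elements
of `G` bounded above in `G` has a supremum in `G` which double commutes with the sequence. -/
def HasCV : Prop :=
  ∀ g : ℕ → R, (∀ n, g n ∈ er.G) → (∀ n, er.le (g n) (g (n + 1))) →
    (∀ m n, g m * g n = g n * g m) → (∃ b ∈ er.G, ∀ n, er.le (g n) b) →
    ∃ s, er.IsSupIn er.G (Set.range g) s ∧ s ∈ er.CC (Set.range g)

/-- `G` is an abstract Hermitian (AH) algebra: there is a semitransparent effect `½`,
`G` has quadratic annihilation, and `G` has the commutative Vigier property. -/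
def IsAH : Prop := (∃ h ∈ er.E, h + h = 1) ∧ er.HasQA ∧ er.HasCV

end ERing

namespace ERing

variable {R : Type*} [Ring R] (er : ERing R)

/-- `m` is the absolute value `|g| = (g²)^(1/2)` of `g`: `m ∈ G`, `0 ≤ m`, `m² = g²`. -/
def IsAbs (g m : R) : Prop := m ∈ er.G ∧ er.le 0 m ∧ m ^ 2 = g ^ 2

/-- `a` is the positive part `g⁺ = ½(|g| + g)` of `g`, i.e. `a ∈ G` and `a + a = |g| + g`. -/
def IsPosPart (g a : R) : Prop := a ∈ er.G ∧ ∃ m, er.IsAbs g m ∧ a + a = m + g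

/-- `b` is the negative part `g⁻ = ½(|g| − g)` of `g`, i.e. `b ∈ G` and `b + b = |g| − g`. -/
def IsNegPart (g b : R) : Prop := b ∈ er.G ∧ ∃ m, er.IsAbs g m ∧ b + b = m - g

/-- `p` is the carrier projection `g°` of `g`. -/
def IsCarrier (g p : R) : Prop := p ∈ er.P ∧ ∀ h ∈ er.G, (g * h = 0 ↔ p * h = 0)

end ERing

namespace ERing

variable {R : Type*} [Ring R] [Algebra ℝ R] (er : ERing R)

/-- The 1-norm `‖g‖ = inf {λ : 0 ≤ λ, −λ·1 ≤ g ≤ λ·1}`. -/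
noncomputable def norm1 (g : R) : ℝ :=
  sInf {l : ℝ | 0 ≤ l ∧ er.le (-(l • (1 : R))) g ∧ er.le g (l • (1 : R))}

/-- The spectral lower bound `L_g = sup {λ : λ·1 ≤ g}`. -/
noncomputable def specL (g : R) : ℝ := sSup {l : ℝ | er.le (l • (1 : R)) g}

/-- The spectral upper bound `U_g = inf {λ : g ≤ λ·1}`. -/
noncomputable def specU (g : R) : ℝ := sInf {l : ℝ | er.le g (l • (1 : R))}

/-- `p` is the spectral projection `p_{g,λ} = 1 − ((g − λ·1)⁺)°`. -/
def IsSpecProj (g : R) (l : ℝ) (p : R) : Prop :=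
  ∃ a, er.IsPosPart (g - l • (1 : R)) a ∧ ∃ q, er.IsCarrier a q ∧ p = 1 - q

/-- `d` is the λ-eigenprojection `d_{g,λ} = 1 − (g − λ·1)°`. -/
def IsEigenProj (g : R) (l : ℝ) (d : R) : Prop :=
  ∃ q, er.IsCarrier (g - l • (1 : R)) q ∧ d = 1 - q

end ERing


namespace ERing

variable {R : Type*} [Ring R]

section plain
variable (er : ERing R)

lemma epos_zero' : (0:R) ∈ er.Epos := (AddSubmonoid.closure er.E).zero_mem

lemma epos_one' : (1:R) ∈ er.Epos := AddSubmonoid.subset_closure er.one_mem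

lemma epos_add' {a b : R} (ha : a ∈ er.Epos) (hb : b ∈ er.Epos) : a + b ∈ er.Epos :=
  (AddSubmonoid.closure er.E).add_mem ha hb

lemma mem_G_of_epos' {a : R} (ha : a ∈ er.Epos) : a ∈ er.G :=
  ⟨a, ha, 0, er.epos_zero', by abel⟩

lemma one_mem_G' : (1:R) ∈ er.G := er.mem_G_of_epos' er.epos_one'

lemma G_neg' {g : R} (hg : g ∈ er.G) : -g ∈ er.G := by
  obtain ⟨a, ha, b, hb, rfl⟩ := hg
  exact ⟨b, hb, a, ha, by abel⟩

lemma G_sub' {g h : R} (hg : g ∈ er.G) (hh : h ∈ er.G) : g - h ∈ er.G := by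
  obtain ⟨a, ha, b, hb, rfl⟩ := hg
  obtain ⟨c, hc, d, hd, rfl⟩ := hh
  exact ⟨a + d, er.epos_add' ha hd, b + c, er.epos_add' hb hc, by abel⟩

lemma G_add' {g h : R} (hg : g ∈ er.G) (hh : h ∈ er.G) : g + h ∈ er.G := by
  have := er.G_sub' hg (er.G_neg' hh)
  simpa using this

lemma sq_mem_epos' {g : R} (hg : g ∈ er.G) : g ^ 2 ∈ er.Epos := by
  obtain ⟨a, ha, b, hb, rfl⟩ := hg
  exact er.epos_vi a ha b hb

/-- key2: if `l•1 - g` and `l•1 + g` are in `E⁺` then so is `(l*l)•1 - g²`. -/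
lemma key2' (l : ℝ) [Algebra ℝ R] {g : R}
    (h1 : l • (1:R) - g ∈ er.Epos) (h2 : l • (1:R) + g ∈ er.Epos) :
    (l*l) • (1:R) - g^2 ∈ er.Epos := by
  have hc : (l • (1:R) - g) * (l • (1:R) + g) = (l*l) • (1:R) - g^2 := by
    simp only [sub_mul, mul_add, add_mul, mul_sub, smul_mul_assoc, mul_smul_comm, one_mul,
      mul_one, smul_smul, smul_add, smul_sub, smul_neg, pow_two]
    abel
  have hc2 : (l • (1:R) + g) * (l • (1:R) - g) = (l*l) • (1:R) - g^2 := by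
    simp only [sub_mul, mul_add, add_mul, mul_sub, smul_mul_assoc, mul_smul_comm, one_mul,
      mul_one, smul_smul, smul_add, smul_sub, smul_neg, pow_two]
    abel
  have := er.epos_iii _ h1 _ h2 (hc.trans hc2.symm)
  rwa [hc] at this

end plain

section scal
variable [Algebra ℝ R] (er : ERing R)

lemma epos_half' (hscal : ∀ l : ℝ, 0 ≤ l → ∀ a ∈ er.Epos, l • a ∈ er.Epos)
    {x : R} (hx : x + x ∈ er.Epos) : x ∈ er.Epos := by
  have h := hscal (1/2) (by norm_num) _ hx
  have e : (1/2 : ℝ) • (x + x) = x := by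
    rw [smul_add, ← add_smul]; norm_num
  rwa [e] at h

/-- one-sided key1 -/
lemma key1aux' (hscal : ∀ l : ℝ, 0 ≤ l → ∀ a ∈ er.Epos, l • a ∈ er.Epos)
    {l : ℝ} (hl : 0 < l) {g : R} (hg : g ∈ er.G)
    (h : (l*l) • (1:R) - g^2 ∈ er.Epos) : l • (1:R) - g ∈ er.Epos := by
  have h1G : l • (1:R) - g ∈ er.G :=
    er.G_sub' (er.mem_G_of_epos' (hscal l hl.le _ er.epos_one')) hg
  have hsq1 : (l • (1:R) - g)^2 ∈ er.Epos := er.sq_mem_epos' h1G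
  have e1 : (l • (1:R) - g)^2 + ((l*l) • (1:R) - g^2)
      = ((l*l) • (1:R) - l • g) + ((l*l) • (1:R) - l • g) := by
    simp only [pow_two, sub_mul, mul_sub, mul_add, add_mul, smul_mul_assoc, mul_smul_comm,
      one_mul, mul_one, smul_smul, smul_add, smul_sub, smul_neg]
    abel
  have hx : (l*l) • (1:R) - l • g ∈ er.Epos := by
    apply er.epos_half' hscal
    rw [← e1]; exact er.epos_add' hsq1 h
  have h2 := hscal (1/l) (by positivity) _ hx
  have e2 : (1/l : ℝ) • ((l*l) • (1:R) - l • g) = l • (1:R) - g := by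
    rw [smul_sub, smul_smul, smul_smul]
    have e3 : (1/l) * (l*l) = l := by field_simp
    have e4 : (1/l) * l = 1 := by field_simp
    rw [e3, e4, one_smul]
  rwa [e2] at h2

lemma key1' (hscal : ∀ l : ℝ, 0 ≤ l → ∀ a ∈ er.Epos, l • a ∈ er.Epos)
    {l : ℝ} (hl : 0 < l) {g : R} (hg : g ∈ er.G)
    (h : (l*l) • (1:R) - g^2 ∈ er.Epos) :
    l • (1:R) - g ∈ er.Epos ∧ l • (1:R) + g ∈ er.Epos := by
  refine ⟨er.key1aux' hscal hl hg h, ?_⟩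
  have hng : -g ∈ er.G := er.G_neg' hg
  have h' : (l*l) • (1:R) - (-g)^2 ∈ er.Epos := by rw [neg_sq]; exact h
  have h2 := er.key1aux' hscal hl hng h'
  rwa [sub_neg_eq_add] at h2

lemma epos_bound' {a : R} (ha : a ∈ er.Epos) :
    ∃ n : ℕ, ((n:ℝ)) • (1:R) - a ∈ er.Epos := by
  induction ha using AddSubmonoid.closure_induction with
  | mem e he =>
      refine ⟨1, ?_⟩
      have h : (1 : R) - e ∈ er.E := er.compl_mem e he
      have h2 : (1 : R) - e ∈ er.Epos := AddSubmonoid.subset_closure h; simpa using h2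
  | zero => exact ⟨0, by simpa using er.epos_zero'⟩
  | add x y hx hy ihx ihy =>
      obtain ⟨n, hn⟩ := ihx
      obtain ⟨m, hm⟩ := ihy
      refine ⟨n + m, ?_⟩
      have h := er.epos_add' hn hm
      have e : ((n:ℝ)) • (1:R) - x + (((m:ℝ)) • (1:R) - y)
          = ((n+m : ℕ):ℝ) • (1:R) - (x + y) := by
        push_cast
        rw [add_smul]; abel
      rwa [e] at h

/-- The norm set. -/
def NS (g : R) : Set ℝ :=
  {l : ℝ | 0 ≤ l ∧ er.le (-(l • (1 : R))) g ∧ er.le g (l • (1 : R))}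

lemma norm1_eq_sInf_NS (g : R) : er.norm1 g = sInf (er.NS g) := rfl

lemma mem_NS' {g : R} {l : ℝ} (h0 : 0 ≤ l) (h1 : l • (1:R) + g ∈ er.Epos)
    (h2 : l • (1:R) - g ∈ er.Epos) : l ∈ er.NS g := by
  refine ⟨h0, ?_, h2⟩
  show g - -(l • (1:R)) ∈ er.Epos
  rw [sub_neg_eq_add, add_comm]; exact h1

lemma NS_spec {g : R} {l : ℝ} (hl : l ∈ er.NS g) :
    0 ≤ l ∧ l • (1:R) + g ∈ er.Epos ∧ l • (1:R) - g ∈ er.Epos := by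
  obtain ⟨h0, h1, h2⟩ := hl
  refine ⟨h0, ?_, h2⟩
  have h : g - -(l • (1:R)) ∈ er.Epos := h1
  rwa [sub_neg_eq_add, add_comm] at h

lemma NS_upward (hscal : ∀ l : ℝ, 0 ≤ l → ∀ a ∈ er.Epos, l • a ∈ er.Epos)
    {g : R} {l m : ℝ} (hl : l ∈ er.NS g) (hlm : l ≤ m) : m ∈ er.NS g := by
  obtain ⟨h0, h1, h2⟩ := er.NS_spec hl
  have hml : (m - l) • (1:R) ∈ er.Epos := hscal _ (by linarith) _ er.epos_one'
  refine er.mem_NS' (by linarith) ?_ ?_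
  · have h3 := er.epos_add' hml h1
    rwa [show (m-l) • (1:R) + (l • (1:R) + g) = m • (1:R) + g from by rw [sub_smul]; abel] at h3
  · have h3 := er.epos_add' hml h2
    rwa [show (m-l) • (1:R) + (l • (1:R) - g) = m • (1:R) - g from by rw [sub_smul]; abel] at h3

lemma NS_nonempty (hscal : ∀ l : ℝ, 0 ≤ l → ∀ a ∈ er.Epos, l • a ∈ er.Epos)
    {g : R} (hg : g ∈ er.G) : (er.NS g).Nonempty := by
  obtain ⟨a, ha, b, hb, rfl⟩ := hg
  obtain ⟨n, hn⟩ := er.epos_bound' ha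
  obtain ⟨m, hm⟩ := er.epos_bound' hb
  refine ⟨((n+m : ℕ):ℝ), er.mem_NS' (by positivity) ?_ ?_⟩
  · have h1 : ((n:ℝ)) • (1:R) ∈ er.Epos := hscal _ (by positivity) _ er.epos_one'
    have h2 := er.epos_add' (er.epos_add' hm h1) ha
    rwa [show ((m:ℝ)) • (1:R) - b + ((n:ℝ)) • (1:R) + a
        = ((n+m:ℕ):ℝ) • (1:R) + (a - b) from by push_cast; rw [add_smul]; abel] at h2
  · have h1 : ((m:ℝ)) • (1:R) ∈ er.Epos := hscal _ (by positivity) _ er.epos_one'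
    have h2 := er.epos_add' (er.epos_add' hn h1) hb
    rwa [show ((n:ℝ)) • (1:R) - a + ((m:ℝ)) • (1:R) + b
        = ((n+m:ℕ):ℝ) • (1:R) - (a - b) from by push_cast; rw [add_smul]; abel] at h2

lemma norm1_le_of_mem {g : R} {l : ℝ} (hl : l ∈ er.NS g) : er.norm1 g ≤ l :=
  csInf_le ⟨0, fun x hx => hx.1⟩ hl

lemma norm1_nonneg' (g : R) : 0 ≤ er.norm1 g :=
  Real.sInf_nonneg (fun x hx => hx.1)

lemma norm1_add_eps_mem (hscal : ∀ l : ℝ, 0 ≤ l → ∀ a ∈ er.Epos, l • a ∈ er.Epos)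
    {g : R} (hg : g ∈ er.G) {e : ℝ} (he : 0 < e) :
    er.norm1 g + e ∈ er.NS g := by
  have hne := er.NS_nonempty hscal hg
  have hlt : sInf (er.NS g) < er.norm1 g + e := by
    rw [← norm1_eq_sInf_NS]; linarith [er.norm1_nonneg' g]
  obtain ⟨x, hx, hxl⟩ := exists_lt_of_csInf_lt hne hlt
  exact er.NS_upward hscal hx hxl.le

end scal

end ERing

/-- helper: epsilon limit -/
lemma eps_helper {x N M : ℝ} (hN : 0 ≤ N) (hM : 0 ≤ M)
    (h : ∀ e : ℝ, 0 < e → x ≤ (N + e) * (M + e)) : x ≤ N * M := by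
  by_contra hx
  push_neg at hx
  have hd : 0 < x - N*M := by linarith
  set e := min 1 ((x - N*M)/(N+M+2)) with he
  have he0 : 0 < e := lt_min one_pos (div_pos hd (by linarith))
  have h1 : e ≤ 1 := min_le_left _ _
  have h2 : e * (N+M+2) ≤ x - N*M := by
    have h4 := min_le_right 1 ((x - N*M)/(N+M+2))
    calc e * (N+M+2) ≤ ((x - N*M)/(N+M+2)) * (N+M+2) := by
          apply mul_le_mul_of_nonneg_right h4 (by linarith)
      _ = x - N*M := by field_simp
  have h3 := h e he0
  nlinarith

namespace ERing

lemma norm1_sq' {R : Type*} [Ring R] [Algebra ℝ R] (er : ERing R)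
    (hscal : ∀ l : ℝ, 0 ≤ l → ∀ a ∈ er.Epos, l • a ∈ er.Epos)
    (hz : ∀ x ∈ er.G, x ^ 2 = 0 → x = 0)
    {g : R} (hg : g ∈ er.G) : er.norm1 (g ^ 2) = er.norm1 g ^ 2 := by
  set N := er.norm1 g with hN
  have hN0 : 0 ≤ N := er.norm1_nonneg' g
  have hg2G : g ^ 2 ∈ er.G := er.mem_G_of_epos' (er.sq_mem_epos' hg)
  have upper : er.norm1 (g ^ 2) ≤ N ^ 2 := by
    rw [pow_two N]
    apply eps_helper hN0 hN0
    intro e he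
    obtain ⟨h0, h1, h2⟩ := er.NS_spec (er.norm1_add_eps_mem hscal hg he)
    have hkey := er.key2' (N + e) h2 h1
    apply er.norm1_le_of_mem
    refine er.mem_NS' (mul_nonneg (by linarith) (by linarith)) ?_ hkey
    exact er.epos_add' (hscal _ (mul_nonneg (by linarith) (by linarith)) _ er.epos_one')
      (er.sq_mem_epos' hg)
  have lower : N ^ 2 ≤ er.norm1 (g ^ 2) := by
    rw [er.norm1_eq_sInf_NS (g ^ 2)]
    apply le_csInf (er.NS_nonempty hscal hg2G)
    intro mu hmu
    obtain ⟨hmu0, hmu1, hmu2⟩ := er.NS_spec hmu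
    rcases eq_or_lt_of_le hmu0 with heq | hpos
    · have hg20 : g ^ 2 = 0 := by
        apply er.epos_i _ (er.sq_mem_epos' hg)
        have h3 := hmu2
        rw [← heq, zero_smul, zero_sub] at h3
        exact h3
      have hg0 : g = 0 := hz g hg hg20
      have hle : N ≤ 0 := by
        apply er.norm1_le_of_mem
        refine er.mem_NS' le_rfl ?_ ?_ <;>
          simp only [hg0, zero_smul, add_zero, sub_zero] <;> exact er.epos_zero'
      have hNz : N = 0 := le_antisymm hle hN0
      rw [hNz, ← heq]
      norm_num
    · set lam := Real.sqrt mu with hlamdef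
      have hlam : 0 < lam := Real.sqrt_pos.mpr hpos
      have hll : lam * lam = mu := Real.mul_self_sqrt hmu0
      have h' : (lam * lam) • (1:R) - g ^ 2 ∈ er.Epos := by rw [hll]; exact hmu2
      obtain ⟨h1, h2⟩ := er.key1' hscal hlam hg h'
      have hNle : N ≤ lam := er.norm1_le_of_mem (er.mem_NS' hlam.le h2 h1)
      calc N ^ 2 ≤ lam ^ 2 := pow_le_pow_left₀ hN0 hNle 2
        _ = mu := by rw [pow_two, hll]
  exact le_antisymm upper lower

end ERing

/-- In an AH-algebra (with real scalars): (i) `−1 ≤ g ≤ 1` iff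
`g² ≤ 1`; (ii) `‖g²‖ = ‖g‖²`; (iii) `‖|g|‖ = ‖g‖`; (iv) if `gCh` then
`‖gh‖ ≤ ‖g‖·‖h‖`. -/
theorem stmt13 {R : Type*} [Ring R] [Algebra ℝ R] (er : ERing R) (hAH : er.IsAH)
    (hscal : ∀ l : ℝ, 0 ≤ l → ∀ a ∈ er.Epos, l • a ∈ er.Epos)
    (g h : R) (hg : g ∈ er.G) (hh : h ∈ er.G) :
    ((er.le (-1) g ∧ er.le g 1) ↔ er.le (g ^ 2) 1) ∧
    er.norm1 (g ^ 2) = er.norm1 g ^ 2 ∧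
    (∀ m, er.IsAbs g m → er.norm1 m = er.norm1 g) ∧
    (g * h = h * g → er.norm1 (g * h) ≤ er.norm1 g * er.norm1 h) := by
  obtain ⟨-, hQA, -⟩ := hAH
  have hzero : ∀ x ∈ er.G, x ^ 2 = 0 → x = 0 := by
    intro x hx hx2
    have h1 := hQA x hx 1 er.one_mem_G' (by rw [one_pow, mul_one, ← pow_two]; exact hx2)
    simpa using h1.1
  have part2 := er.norm1_sq' hscal hzero hg
  refine ⟨?_, part2, ?_, ?_⟩
  · constructor
    · rintro ⟨hlo, hhi⟩
      have h1 : (1:ℝ) • (1:R) - g ∈ er.Epos := by rw [one_smul]; exact hhi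
      have h2 : (1:ℝ) • (1:R) + g ∈ er.Epos := by
        rw [one_smul]
        have h3 : g - (-1) ∈ er.Epos := hlo
        rwa [sub_neg_eq_add, add_comm] at h3
      have h4 := er.key2' 1 h1 h2
      show (1:R) - g ^ 2 ∈ er.Epos
      simpa using h4
    · intro hsq
      have h' : ((1:ℝ) * 1) • (1:R) - g ^ 2 ∈ er.Epos := by
        have hsq' : (1:R) - g ^ 2 ∈ er.Epos := hsq; simpa using hsq'
      obtain ⟨h1, h2⟩ := er.key1' hscal one_pos hg h'
      rw [one_smul] at h1 h2
      refine ⟨?_, h1⟩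
      show g - (-1) ∈ er.Epos
      rw [sub_neg_eq_add]
      rwa [add_comm] at h2
  · rintro m ⟨hmG, hm0, hmsq⟩
    have e1 := er.norm1_sq' hscal hzero hmG
    have e2 : er.norm1 m ^ 2 = er.norm1 g ^ 2 := by
      rw [← e1, hmsq, part2]
    have a := er.norm1_nonneg' m
    have b := er.norm1_nonneg' g
    calc er.norm1 m = Real.sqrt (er.norm1 m ^ 2) := (Real.sqrt_sq a).symm
      _ = Real.sqrt (er.norm1 g ^ 2) := by rw [e2]
      _ = er.norm1 g := Real.sqrt_sq b
  · intro hcomm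
    apply eps_helper (er.norm1_nonneg' g) (er.norm1_nonneg' h)
    intro e he
    obtain ⟨hA0, hA1, hA2⟩ := er.NS_spec (er.norm1_add_eps_mem hscal hg he)
    obtain ⟨hB0, hB1, hB2⟩ := er.NS_spec (er.norm1_add_eps_mem hscal hh he)
    set a := er.norm1 g + e with ha
    set b := er.norm1 h + e with hb
    have hC : ∀ x : R, Commute (a • (1:R)) x := fun x => (Commute.one_left x).smul_left a
    have hD : ∀ x : R, Commute (b • (1:R)) x := fun x => (Commute.one_left x).smul_left b
    have hgh : Commute g h := hcomm
    have c1 : Commute (a • (1:R) - g) (b • (1:R) + h) :=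
      Commute.sub_left (hC _) (Commute.add_right (hD g).symm hgh)
    have c2 : Commute (a • (1:R) + g) (b • (1:R) - h) :=
      Commute.add_left (hC _) (Commute.sub_right (hD g).symm hgh)
    have c3 : Commute (a • (1:R) - g) (b • (1:R) - h) :=
      Commute.sub_left (hC _) (Commute.sub_right (hD g).symm hgh)
    have c4 : Commute (a • (1:R) + g) (b • (1:R) + h) :=
      Commute.add_left (hC _) (Commute.add_right (hD g).symm hgh)
    have p1 := er.epos_iii _ hA2 _ hB1 c1
    have p2 := er.epos_iii _ hA1 _ hB2 c2
    have p3 := er.epos_iii _ hA2 _ hB2 c3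
    have p4 := er.epos_iii _ hA1 _ hB1 c4
    have eU : (a • (1:R) - g) * (b • (1:R) + h) + (a • (1:R) + g) * (b • (1:R) - h)
        = ((a*b) • (1:R) - g * h) + ((a*b) • (1:R) - g * h) := by
      simp only [sub_mul, mul_add, add_mul, mul_sub, smul_mul_assoc, mul_smul_comm, one_mul,
        mul_one, smul_smul, smul_add, smul_sub, smul_neg]
      module
    have eL : (a • (1:R) - g) * (b • (1:R) - h) + (a • (1:R) + g) * (b • (1:R) + h)
        = ((a*b) • (1:R) + g * h) + ((a*b) • (1:R) + g * h) := by
      simp only [sub_mul, mul_add, add_mul, mul_sub, smul_mul_assoc, mul_smul_comm, one_mul,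
        mul_one, smul_smul, smul_add, smul_sub, smul_neg]
      module
    have hU : (a*b) • (1:R) - g * h ∈ er.Epos := by
      apply er.epos_half' hscal
      rw [← eU]; exact er.epos_add' p1 p2
    have hL : (a*b) • (1:R) + g * h ∈ er.Epos := by
      apply er.epos_half' hscal
      rw [← eL]; exact er.epos_add' p3 p4
    exact er.norm1_le_of_mem (er.mem_NS' (mul_nonneg hA0 hB0) hL hU)
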